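/- The minimum Hamming weight of a nonzero codeword of the binary Reed-Muller code RM(r,m) is 2^{m-r}. -/

import Mathlib

open Finset
open scoped symmDiff

/-- The Hamming weight of a vector over `ZMod 2` indexed by a fintype. -/
def hamWt {ι : Type*} [Fintype ι] (v : ι → ZMod 2) : ℕ :=
  (Finset.univ.filter (fun i => v i ≠ 0)).card

/-- The Reed-Muller code `RM(r,m)`. -/
def RMcode (r m : ℕ) : Submodule (ZMod 2) ((Fin m → ZMod 2) → ZMod 2) :=
  Submodule.span (ZMod 2)
    { c | ∃ S : Finset (Fin m), S.card ≤ r ∧ c = fun x => ∏ i ∈ S, x i }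

namespace RMaux

variable {m : ℕ}

/-- The monomial function attached to a set of variables. -/
def chi (S : Finset (Fin m)) : (Fin m → ZMod 2) → ZMod 2 := fun x => ∏ i ∈ S, x i

lemma zmod2_cases (a : ZMod 2) : a = 0 ∨ a = 1 := by revert a; decide

lemma zmod2_ne_zero {a : ZMod 2} : a ≠ 0 ↔ a = 1 := by revert a; decide

lemma zmod2_add_self (a : ZMod 2) : a + a = 0 := by revert a; decide

/-- Number of sets between `A` and `T`. -/
lemma card_between (T A : Finset (Fin m)) (hA : A ⊆ T) :
    ((T.powerset).filter (fun U => A ⊆ U)).card = 2 ^ (T \ A).card := by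
  rw [← Finset.card_powerset]
  apply Finset.card_bij' (fun U _ => U \ A) (fun V _ => V ∪ A)
  · intro U hU
    simp only [mem_filter, mem_powerset] at hU
    exact mem_powerset.2 (Finset.sdiff_subset_sdiff hU.1 le_rfl)
  · intro V hV
    rw [mem_powerset] at hV
    refine mem_filter.2 ⟨mem_powerset.2 ?_, Finset.subset_union_right⟩
    exact Finset.union_subset (hV.trans Finset.sdiff_subset) hA
  · intro U hU
    simp only [mem_filter, mem_powerset] at hU
    exact Finset.sdiff_union_of_subset hU.2
  · intro V hV
    rw [mem_powerset] at hV
    have hd : Disjoint V A := Finset.disjoint_left.2 fun i hiV hiA =>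
      (Finset.mem_sdiff.1 (hV hiV)).2 hiA
    exact Finset.union_sdiff_cancel_right hd

lemma prod_indicator (A U : Finset (Fin m)) :
    (∏ i ∈ A, if i ∈ U then (1 : ZMod 2) else 0) = if A ⊆ U then 1 else 0 := by
  split_ifs with h
  · exact Finset.prod_eq_one fun i hi => if_pos (h hi)
  · obtain ⟨i, hiA, hiU⟩ := Finset.not_subset.1 h
    exact Finset.prod_eq_zero hiA (if_neg hiU)

/-- Counting points with prescribed values on a set. -/
lemma card_fixed (T : Finset (Fin m)) (a : ZMod 2) :
    ((Finset.univ.filter (fun z : Fin m → ZMod 2 => ∀ i ∈ T, z i = a))).card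
      = 2 ^ (m - T.card) := by
  have he : (Finset.univ.filter (fun z : Fin m → ZMod 2 => ∀ i ∈ T, z i = a))
      = Fintype.piFinset (fun i => if i ∈ T then ({a} : Finset (ZMod 2)) else Finset.univ) := by
    ext z
    simp only [mem_filter, mem_univ, true_and, Fintype.mem_piFinset]
    constructor
    · intro h i
      by_cases hi : i ∈ T
      · simp [hi, h i hi]
      · simp [hi]
    · intro h i hi
      have := h i
      simpa [hi] using this
  rw [he, Fintype.card_piFinset]
  have hc : ∀ i : Fin m,
      ((if i ∈ T then ({a} : Finset (ZMod 2)) else Finset.univ)).card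
        = if i ∈ T then 1 else 2 := by
    intro i; split_ifs <;> simp
  simp_rw [hc]
  rw [← Finset.prod_sdiff (Finset.subset_univ T)]
  have h1 : ∏ i ∈ (Finset.univ \ T), (if i ∈ T then 1 else 2)
      = 2 ^ (Finset.univ \ T).card := by
    rw [Finset.prod_congr rfl (fun i hi => if_neg (Finset.mem_sdiff.1 hi).2),
      Finset.prod_const]
  have h2 : ∏ i ∈ T, (if i ∈ T then 1 else 2) = 1 :=
    Finset.prod_eq_one fun i hi => if_pos hi
  rw [h1, h2, mul_one, Finset.card_sdiff_of_subset (Finset.subset_univ T), Finset.card_univ,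
    Fintype.card_fin]

lemma hamWt_chi (S : Finset (Fin m)) : hamWt (chi S) = 2 ^ (m - S.card) := by
  have he : (Finset.univ.filter (fun x => chi S x ≠ 0))
      = (Finset.univ.filter (fun x : Fin m → ZMod 2 => ∀ i ∈ S, x i = 1)) := by
    ext x
    rw [mem_filter, mem_filter]; simp only [mem_univ, true_and, chi]
    rw [Finset.prod_ne_zero_iff]
    exact ⟨fun h i hi => zmod2_ne_zero.1 (h i hi), fun h i hi => zmod2_ne_zero.2 (h i hi)⟩
  rw [hamWt, he, card_fixed]

/-- The restricted product computation. -/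
lemma chi_eval (S T U : Finset (Fin m)) (hU : U ⊆ T) (z : Fin m → ZMod 2)
    (hz : ∀ i ∈ T, z i = 0) :
    chi S (fun i => if i ∈ U then 1 else z i)
      = if S ∩ T ⊆ U then (∏ i ∈ S \ T, z i) else 0 := by
  unfold chi
  rw [← Finset.prod_sdiff (Finset.inter_subset_left : S ∩ T ⊆ S)]
  have hd : S \ (S ∩ T) = S \ T := by ext i; simp [Finset.mem_sdiff]
  rw [hd]
  have h1 : ∏ i ∈ S \ T, (if i ∈ U then (1 : ZMod 2) else z i) = ∏ i ∈ S \ T, z i := by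
    refine Finset.prod_congr rfl fun i hi => ?_
    have : i ∉ U := fun hiU => (Finset.mem_sdiff.1 hi).2 (hU hiU)
    rw [if_neg this]
  have h2 : ∏ i ∈ S ∩ T, (if i ∈ U then (1 : ZMod 2) else z i)
      = if S ∩ T ⊆ U then 1 else 0 := by
    rw [Finset.prod_congr rfl fun i hi => ?_, prod_indicator]
    have : z i = 0 := hz i (Finset.mem_inter.1 hi).2
    rw [this]
  rw [h1, h2]
  split_ifs <;> ring

/-- Key identity: summing a codeword over the subcube through `1_T` yields `1`. -/
lemma key_sum (𝒮 : Finset (Finset (Fin m))) (T : Finset (Fin m)) (hT : T ∈ 𝒮)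
    (hmax : ∀ S ∈ 𝒮, T ⊆ S → S = T) (z : Fin m → ZMod 2) (hz : ∀ i ∈ T, z i = 0) :
    ∑ U ∈ T.powerset, (∑ S ∈ 𝒮, chi S (fun i => if i ∈ U then 1 else z i)) = 1 := by
  rw [Finset.sum_comm]
  have hinner : ∀ S ∈ 𝒮,
      ∑ U ∈ T.powerset, chi S (fun i => if i ∈ U then 1 else z i)
        = ((2 : ZMod 2) ^ (T \ S).card) * ∏ i ∈ S \ T, z i := by
    intro S _
    have : ∀ U ∈ T.powerset, chi S (fun i => if i ∈ U then 1 else z i)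
        = if S ∩ T ⊆ U then (∏ i ∈ S \ T, z i) else 0 := fun U hU =>
      chi_eval S T U (Finset.mem_powerset.1 hU) z hz
    rw [Finset.sum_congr rfl this, ← Finset.sum_filter, Finset.sum_const,
      card_between T (S ∩ T) Finset.inter_subset_right]
    have hTS : T \ (S ∩ T) = T \ S := by ext i; simp [Finset.mem_sdiff]
    rw [hTS, nsmul_eq_mul, Nat.cast_pow, Nat.cast_ofNat]
  rw [Finset.sum_congr rfl hinner, Finset.sum_eq_single T]
  · simp
  · intro S hS hST
    have hns : ¬ T ⊆ S := fun h => hST (hmax S hS h)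
    have hpos : (T \ S).card ≠ 0 := by
      simpa [Finset.card_eq_zero, Finset.sdiff_eq_empty_iff_subset] using hns
    have h2 : (2 : ZMod 2) = 0 := by decide
    rw [h2, zero_pow hpos, zero_mul]
  · intro h; exact absurd hT h

/-- Every codeword is a sum of monomials of degree at most `r`. -/
lemma repr_mem {r : ℕ} {c : (Fin m → ZMod 2) → ZMod 2} (hc : c ∈ RMcode r m) :
    ∃ 𝒮 : Finset (Finset (Fin m)), (∀ S ∈ 𝒮, S.card ≤ r) ∧ c = ∑ S ∈ 𝒮, chi S := by
  induction hc using Submodule.span_induction with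
  | mem x hx =>
      obtain ⟨S, hS, rfl⟩ := hx
      exact ⟨{S}, by simpa using hS, by rw [Finset.sum_singleton]; rfl⟩
  | zero => exact ⟨∅, by simp, by simp⟩
  | add x y hx hy ihx ihy =>
      obtain ⟨A, hA, rfl⟩ := ihx
      obtain ⟨B, hB, rfl⟩ := ihy
      refine ⟨A ∆ B, ?_, ?_⟩
      · intro S hS
        rw [Finset.mem_symmDiff] at hS
        rcases hS with ⟨h, _⟩ | ⟨h, _⟩
        exacts [hA S h, hB S h]
      · have hΔ : A ∆ B = (A ∪ B) \ (A ∩ B) := by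
          ext S; simp [Finset.mem_symmDiff]; tauto
        have hsub : A ∩ B ⊆ A ∪ B := Finset.inter_subset_left.trans Finset.subset_union_left
        have h1 : (∑ S ∈ A ∆ B, chi S) + ∑ S ∈ A ∩ B, chi S = ∑ S ∈ A ∪ B, chi S := by
          rw [hΔ]; exact Finset.sum_sdiff hsub
        have h2 : (∑ S ∈ A ∪ B, chi S) + ∑ S ∈ A ∩ B, chi S
            = (∑ S ∈ A, chi S) + ∑ S ∈ B, chi S := Finset.sum_union_inter
        have hself : (∑ S ∈ A ∩ B, chi S) + ∑ S ∈ A ∩ B, chi S = 0 := by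
          funext x
          exact zmod2_add_self _
        calc (∑ S ∈ A, chi S) + ∑ S ∈ B, chi S
            = (∑ S ∈ A ∪ B, chi S) + ∑ S ∈ A ∩ B, chi S := h2.symm
          _ = ((∑ S ∈ A ∆ B, chi S) + ∑ S ∈ A ∩ B, chi S) + ∑ S ∈ A ∩ B, chi S := by
              rw [h1]
          _ = ∑ S ∈ A ∆ B, chi S := by rw [add_assoc, hself, add_zero]
  | smul a x hx ihx =>
      obtain ⟨A, hA, rfl⟩ := ihx
      rcases zmod2_cases a with rfl | rfl
      · exact ⟨∅, by simp, by simp⟩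
      · exact ⟨A, hA, by simp⟩

end RMaux

open RMaux in
/-- The minimum Hamming weight of a nonzero codeword of `RM(r,m)` is `2^(m-r)`. -/
theorem RM_min_weight (r m : ℕ) (hr : r ≤ m) :
    (∃ c ∈ RMcode r m, c ≠ 0 ∧ hamWt c = 2 ^ (m - r)) ∧
      ∀ c ∈ RMcode r m, c ≠ 0 → 2 ^ (m - r) ≤ hamWt c := by
  constructor
  · -- existence
    obtain ⟨S, -, hScard⟩ := Finset.exists_subset_card_eq
      (show r ≤ (Finset.univ : Finset (Fin m)).card by simpa using hr)
    refine ⟨chi S, Submodule.subset_span ⟨S, le_of_eq hScard, rfl⟩, ?_, ?_⟩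
    · intro h
      have hw : hamWt (chi (m := m) S) = 0 := by
        rw [h]; simp [hamWt]
      rw [hamWt_chi, hScard] at hw
      exact (pow_ne_zero _ (by norm_num)) hw
    · rw [hamWt_chi, hScard]
  · -- lower bound
    intro c hc hc0
    obtain ⟨𝒮, hcard, rfl⟩ := repr_mem hc
    have hne : 𝒮.Nonempty := by
      rcases Finset.eq_empty_or_nonempty 𝒮 with rfl | h
      · simp at hc0
      · exact h
    obtain ⟨T, hT, hTmax⟩ : ∃ T ∈ 𝒮, ∀ x ∈ 𝒮, ¬ T < x := by
      obtain ⟨T, hT⟩ := Finset.exists_maximal hne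
      exact ⟨T, hT.prop, fun x hx hlt => hlt.not_ge (hT.le_of_ge hx hlt.le)⟩
    have hmax : ∀ S ∈ 𝒮, T ⊆ S → S = T := by
      intro S hS hTS
      by_contra hne'
      exact hTmax S hS (lt_of_le_of_ne hTS fun h => hne' h.symm)
    set c := ∑ S ∈ 𝒮, chi S with hcdef
    -- each fiber over an assignment vanishing on T contains a nonzero point
    have hsurj : Set.SurjOn (fun (x : Fin m → ZMod 2) i => if i ∈ T then 0 else x i)
        ↑(Finset.univ.filter (fun x => c x ≠ 0))
        ↑(Finset.univ.filter (fun z : Fin m → ZMod 2 => ∀ i ∈ T, z i = 0)) := by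
      intro z hz
      simp only [Finset.coe_filter, Set.mem_setOf_eq, Finset.mem_univ, true_and] at hz
      have hex : ∃ U ∈ T.powerset, c (fun i => if i ∈ U then 1 else z i) ≠ 0 := by
        by_contra h
        push_neg at h
        have hk := key_sum 𝒮 T hT hmax z hz
        have h' : ∀ U ∈ T.powerset,
            (∑ S ∈ 𝒮, chi S (fun i => if i ∈ U then 1 else z i)) = 0 := by
          intro U hU
          have := h U hU
          rwa [hcdef, Finset.sum_apply] at this
        rw [Finset.sum_congr rfl h'] at hk
        simp at hk
      obtain ⟨U, hU, hcU⟩ := hex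
      have hUT : U ⊆ T := Finset.mem_powerset.1 hU
      refine ⟨fun i => if i ∈ U then 1 else z i, ?_, ?_⟩
      · simpa using hcU
      · funext i
        by_cases hiT : i ∈ T
        · simp only [if_pos hiT]
          exact (hz i hiT).symm
        · have hiU : i ∉ U := fun h => hiT (hUT h)
          simp only [if_neg hiT, if_neg hiU]
    have hle := Finset.card_le_card_of_surjOn _ hsurj
    rw [card_fixed] at hle
    refine le_trans ?_ hle
    exact Nat.pow_le_pow_right (by norm_num) (Nat.sub_le_sub_left (hcard T hT) m)
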